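/- arXiv:2101.03830 — 2 statements merged into one kernel-verified Lean document; each statement's English description precedes it below -/
import Mathlib

section
/- Let L : E × E → ℝ be of class C¹ and X : E → E differentiable at every point. Define p : E → E by p(q) := ∇_vL(q, X q), and assume: (a) p is differentiable with symmetric derivative, i.e. ⟪fderiv p q u, v⟫ = ⟪fderiv p q v, u⟫ for all q, u, v (the condition X*ω_L = 0); and (b) the Lagrangian energy along X, q ↦ ⟪X q, p q⟫ − L(q, X q), is constant on E. Then for every q ∈ E, fderiv p q (X q) = ∇_qL(q, X q); that is, the Lagrangian dynamics is tangent to the image of X. -/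
open scoped Gradient RealInnerProductSpace

/-- The gradient at `q` of the partial map `q' ↦ L (q', v)`. -/
noncomputable def gradQ {n : ℕ}
    (L : EuclideanSpace ℝ (Fin n) × EuclideanSpace ℝ (Fin n) → ℝ)
    (q v : EuclideanSpace ℝ (Fin n)) : EuclideanSpace ℝ (Fin n) :=
  ∇ (fun q' => L (q', v)) q

/-- The gradient at `v` of the partial map `v' ↦ L (q, v')`. -/
noncomputable def gradV {n : ℕ}
    (L : EuclideanSpace ℝ (Fin n) × EuclideanSpace ℝ (Fin n) → ℝ)
    (q v : EuclideanSpace ℝ (Fin n)) : EuclideanSpace ℝ (Fin n) :=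
  ∇ (fun v' => L (q, v')) v

/-- If the momentum map `p q = ∇ᵥL (q, X q)` of a vector field `X` has symmetric derivative
(`X*ω_L = 0`) and the Lagrangian energy along `X` is constant, then the Lagrangian dynamics
is tangent to the image of `X`: `fderiv p q (X q) = ∇_qL (q, X q)` for all `q`. -/
theorem lagrangian_dynamics_tangent_to_image {n : ℕ}
    (L : EuclideanSpace ℝ (Fin n) × EuclideanSpace ℝ (Fin n) → ℝ)
    (hL : ContDiff ℝ 1 L)
    (X : EuclideanSpace ℝ (Fin n) → EuclideanSpace ℝ (Fin n))
    (hX : ∀ q, DifferentiableAt ℝ X q)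
    (p : EuclideanSpace ℝ (Fin n) → EuclideanSpace ℝ (Fin n))
    (hp : ∀ q, p q = gradV L q (X q))
    (hpdiff : ∀ q, DifferentiableAt ℝ p q)
    (hsymm : ∀ q u v, ⟪fderiv ℝ p q u, v⟫ = ⟪fderiv ℝ p q v, u⟫)
    (henergy : ∀ q q', ⟪X q, p q⟫ - L (q, X q) = ⟪X q', p q'⟫ - L (q', X q')) :
    ∀ q, fderiv ℝ p q (X q) = gradQ L q (X q) := by
  intro q
  have hLd : Differentiable ℝ L := hL.differentiable one_ne_zero
  set DL := fderiv ℝ L (q, X q) with hDL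
  set DX := fderiv ℝ X q with hDX
  set DP := fderiv ℝ p q with hDP
  -- gradients vs partial derivatives of L
  have hgQ : ∀ u, ⟪gradQ L q (X q), u⟫ = DL (u, 0) := by
    intro u
    have h : HasFDerivAt (fun q' => L (q', X q)) (DL.comp (ContinuousLinearMap.inl ℝ _ _)) q :=
      (hLd _).hasFDerivAt.comp q (hasFDerivAt_prodMk_left q (X q))
    rw [gradQ, gradient, InnerProductSpace.toDual_symm_apply, h.fderiv]
    rfl
  have hgV : ∀ w, ⟪p q, w⟫ = DL (0, w) := by
    intro w
    have h : HasFDerivAt (fun v' => L (q, v')) (DL.comp (ContinuousLinearMap.inr ℝ _ _)) (X q) :=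
      (hLd _).hasFDerivAt.comp (X q) (hasFDerivAt_prodMk_right q (X q))
    rw [hp q, gradV, gradient, InnerProductSpace.toDual_symm_apply, h.fderiv]
    rfl
  -- the energy function is constant, so its derivative vanishes
  have hf : HasFDerivAt (fun q' => ⟪X q', p q'⟫ - L (q', X q'))
      (((fderivInnerCLM ℝ (X q, p q)).comp (DX.prod DP)) -
        (DL.comp ((ContinuousLinearMap.id ℝ _).prod DX))) q := by
    exact HasFDerivAt.sub
      ((hX q).hasFDerivAt.inner ℝ (hpdiff q).hasFDerivAt)
      ((hLd _).hasFDerivAt.comp q ((hasFDerivAt_id q).prodMk (hX q).hasFDerivAt))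
  have hconst : (fun q' => ⟪X q', p q'⟫ - L (q', X q')) =
      fun _ => ⟪X q, p q⟫ - L (q, X q) := funext fun q' => (henergy q q').symm
  have hzero : ∀ u, ⟪X q, DP u⟫ + ⟪DX u, p q⟫ - DL (u, DX u) = 0 := by
    intro u
    have := hf.fderiv
    rw [hconst, fderiv_const_apply] at this
    have h0 := congrArg (fun φ => φ u) this
    simpa [fderivInnerCLM_apply] using h0.symm
  -- main computation
  have key : ∀ u, ⟪X q, DP u⟫ = ⟪gradQ L q (X q), u⟫ := by
    intro u
    have hsplit : DL (u, DX u) = DL (u, 0) + DL (0, DX u) := by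
      rw [← map_add]; norm_num
    have h := hzero u
    rw [hsplit, ← hgQ u, ← hgV (DX u), real_inner_comm (DX u) (p q)] at h
    linarith
  refine ext_inner_right ℝ fun u => ?_
  rw [← hsymm q u (X q), real_inner_comm]
  exact key u
end

section
/- Let L : E × E → ℝ be of class C¹ and X : E → E differentiable at every point, with momentum map p(q) := ∇_vL(q, X q). Assume: (a) p is differentiable with symmetric derivative, i.e. ⟪fderiv p q u, v⟫ = ⟪fderiv p q v, u⟫ for all q, u, v; and (b) the function q ↦ ⟪X q, p q⟫ − L(q, X q) is constant on E (X is a solution of the Lagrangian Hamilton–Jacobi problem). Then for every curve γ : ℝ → E with γ'(t) = X(γ t) for all t, the Euler–Lagrange equations hold along the lifted curve (γ, X ∘ γ): for every t, the curve s ↦ p(γ s) = ∇_vL(γ s, X (γ s)) has derivative ∇_qL(γ t, X (γ t)) at t. -/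
open scoped Gradient RealInnerProductSpace

lemma inner_gradient_eq_fderiv {n : ℕ} (f : EuclideanSpace ℝ (Fin n) → ℝ)
    (x u : EuclideanSpace ℝ (Fin n)) : ⟪∇ f x, u⟫ = fderiv ℝ f x u := by
  rw [gradient, InnerProductSpace.toDual_symm_apply]

/-- If `X` is a solution of the Lagrangian Hamilton–Jacobi problem (its momentum map has
symmetric derivative and the energy along `X` is constant), then every integral curve `γ`
of `X` satisfies the Euler–Lagrange equations:
`d/dt ∇ᵥL (γ t, X (γ t)) = ∇_qL (γ t, X (γ t))`. -/
theorem eulerLagrange_along_integral_curves {n : ℕ}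
    (L : EuclideanSpace ℝ (Fin n) × EuclideanSpace ℝ (Fin n) → ℝ)
    (hL : ContDiff ℝ 1 L)
    (X : EuclideanSpace ℝ (Fin n) → EuclideanSpace ℝ (Fin n))
    (hX : ∀ q, DifferentiableAt ℝ X q)
    (p : EuclideanSpace ℝ (Fin n) → EuclideanSpace ℝ (Fin n))
    (hp : ∀ q, p q = gradV L q (X q))
    (hpdiff : ∀ q, DifferentiableAt ℝ p q)
    (hsymm : ∀ q u v, ⟪fderiv ℝ p q u, v⟫ = ⟪fderiv ℝ p q v, u⟫)
    (henergy : ∀ q q', ⟪X q, p q⟫ - L (q, X q) = ⟪X q', p q'⟫ - L (q', X q'))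
    (γ : ℝ → EuclideanSpace ℝ (Fin n))
    (hγ : ∀ t, HasDerivAt γ (X (γ t)) t) :
    ∀ t, HasDerivAt (fun s => p (γ s)) (gradQ L (γ t) (X (γ t))) t := by
  have hLd : Differentiable ℝ L := hL.differentiable one_ne_zero
  -- partial derivatives of L in terms of the full fderiv
  have hgradQ : ∀ q v u : EuclideanSpace ℝ (Fin n),
      ⟪gradQ L q v, u⟫ = fderiv ℝ L (q, v) (u, 0) := by
    intro q v u
    have h : HasFDerivAt (fun q' => L (q', v))
        ((fderiv ℝ L (q, v)).comp
          ((ContinuousLinearMap.id ℝ (EuclideanSpace ℝ (Fin n))).prod 0)) q :=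
      (hLd (q, v)).hasFDerivAt.comp q (HasFDerivAt.prodMk (hasFDerivAt_id q) (hasFDerivAt_const v q))
    rw [gradQ, inner_gradient_eq_fderiv, h.fderiv]
    simp
  have hgradV : ∀ q v u : EuclideanSpace ℝ (Fin n),
      ⟪gradV L q v, u⟫ = fderiv ℝ L (q, v) (0, u) := by
    intro q v u
    have h : HasFDerivAt (fun v' => L (q, v'))
        ((fderiv ℝ L (q, v)).comp
          ((0 : EuclideanSpace ℝ (Fin n) →L[ℝ] EuclideanSpace ℝ (Fin n)).prod
            (ContinuousLinearMap.id ℝ (EuclideanSpace ℝ (Fin n))))) v :=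
      (hLd (q, v)).hasFDerivAt.comp v (HasFDerivAt.prodMk (hasFDerivAt_const q v) (hasFDerivAt_id v))
    rw [gradV, inner_gradient_eq_fderiv, h.fderiv]
    simp
  -- the key identity: fderiv p q (X q) = gradQ L q (X q)
  have key : ∀ q : EuclideanSpace ℝ (Fin n), fderiv ℝ p q (X q) = gradQ L q (X q) := by
    intro q
    -- the energy function is constant, hence has zero derivative
    have hconst : (fun q' => ⟪X q', p q'⟫ - L (q', X q'))
        = fun _ => ⟪X q, p q⟫ - L (q, X q) := funext fun q' => henergy q' q
    have hF0 : HasFDerivAt (fun q' => ⟪X q', p q'⟫ - L (q', X q'))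
        (0 : EuclideanSpace ℝ (Fin n) →L[ℝ] ℝ) q := by
      rw [hconst]; exact hasFDerivAt_const _ q
    -- the computed derivative of the energy function
    have hinner : HasFDerivAt (fun q' => ⟪X q', p q'⟫)
        ((fderivInnerCLM ℝ (X q, p q)).comp
          ((fderiv ℝ X q).prod (fderiv ℝ p q))) q :=
      (hX q).hasFDerivAt.inner ℝ (hpdiff q).hasFDerivAt
    have hcomp : HasFDerivAt (fun q' => L (q', X q'))
        ((fderiv ℝ L (q, X q)).comp
          ((ContinuousLinearMap.id ℝ (EuclideanSpace ℝ (Fin n))).prod (fderiv ℝ X q))) q :=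
      (hLd (q, X q)).hasFDerivAt.comp q (HasFDerivAt.prodMk (hasFDerivAt_id q) (hX q).hasFDerivAt)
    have hF : HasFDerivAt (fun q' => ⟪X q', p q'⟫ - L (q', X q'))
        (((fderivInnerCLM ℝ (X q, p q)).comp ((fderiv ℝ X q).prod (fderiv ℝ p q)))
          - ((fderiv ℝ L (q, X q)).comp
            ((ContinuousLinearMap.id ℝ (EuclideanSpace ℝ (Fin n))).prod (fderiv ℝ X q)))) q :=
      hinner.sub hcomp
    have heq := hF.fderiv.symm.trans hF0.fderiv
    -- pointwise: for all u, the derivative vanishes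
    have hpt : ∀ u : EuclideanSpace ℝ (Fin n),
        ⟪X q, fderiv ℝ p q u⟫ + ⟪fderiv ℝ X q u, p q⟫
          = fderiv ℝ L (q, X q) (u, fderiv ℝ X q u) := by
      intro u
      have := ContinuousLinearMap.ext_iff.mp heq u
      simp only [ContinuousLinearMap.sub_apply, ContinuousLinearMap.comp_apply,
        ContinuousLinearMap.prod_apply, ContinuousLinearMap.coe_id', id_eq,
        fderivInnerCLM_apply, ContinuousLinearMap.zero_apply] at this
      linarith
    -- split fderiv L into partials
    have hsplit : ∀ u w : EuclideanSpace ℝ (Fin n),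
        fderiv ℝ L (q, X q) (u, w) = ⟪gradQ L q (X q), u⟫ + ⟪gradV L q (X q), w⟫ := by
      intro u w
      rw [hgradQ, hgradV, ← ContinuousLinearMap.map_add]
      norm_num
    -- conclude by symmetry of the derivative of p
    apply ext_inner_right ℝ
    intro u
    have h1 := hpt u
    rw [hsplit, ← hp q] at h1
    have h2 : ⟪fderiv ℝ X q u, p q⟫ = ⟪p q, fderiv ℝ X q u⟫ := real_inner_comm _ _
    have h3 : ⟪X q, fderiv ℝ p q u⟫ = ⟪gradQ L q (X q), u⟫ := by linarith
    rw [hsymm q (X q) u, real_inner_comm]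
    exact h3
  intro t
  have h1 : HasDerivAt (fun s => p (γ s)) (fderiv ℝ p (γ t) (X (γ t))) t :=
    (hpdiff (γ t)).hasFDerivAt.comp_hasDerivAt t (hγ t)
  rw [← key (γ t)]
  exact h1
end
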